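/- Let a < b, c > 0, and let h : [a,b] → ℝ be a positive antitone function. Assume that for almost every t ∈ [a,b] (with respect to Lebesgue measure), h is differentiable at t and h'(t) ≤ −c·h(t). Then h(b) ≤ h(a)·e^{−c·(b−a)}. -/

import Mathlib

open Set MeasureTheory Real
open scoped Topology

/-- Key analytic estimate in the proof of Lemma 5 of the paper: a positive antitone
function on `[a,b]` whose almost-everywhere derivative satisfies `h' ≤ −c·h` decays
at least exponentially: `h(b) ≤ h(a)·e^{−c(b−a)}`. -/
theorem antitone_decay_of_ae_deriv_le
    (a b c : ℝ) (hab : a < b) (hc : 0 < c)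
    (h : ℝ → ℝ)
    (hpos : ∀ t ∈ Icc a b, 0 < h t)
    (hanti : AntitoneOn h (Icc a b))
    (hderiv : ∀ᵐ t : ℝ ∂volume, t ∈ Icc a b →
      DifferentiableAt ℝ h t ∧ deriv h t ≤ -c * h t) :
    h b ≤ h a * Real.exp (-c * (b - a)) := by
  -- clamp function
  set P : ℝ → ℝ := fun t => max a (min t b) with hPdef
  have hPmem : ∀ t, P t ∈ Icc a b := by
    intro t
    constructor
    · exact le_max_left _ _
    · exact max_le (le_of_lt hab) (min_le_right _ _)
  have hPeq : ∀ t ∈ Icc a b, P t = t := by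
    intro t ht
    simp only [hPdef]
    rw [min_eq_left ht.2, max_eq_right ht.1]
  have hPmono : Monotone P := by
    intro x y hxy
    exact max_le_max le_rfl (min_le_min hxy le_rfl)
  -- the monotone function g
  set g : ℝ → ℝ := fun t => -Real.log (h (P t)) with hgdef
  have hgmono : Monotone g := by
    intro x y hxy
    have h1 : h (P y) ≤ h (P x) := hanti (hPmem x) (hPmem y) (hPmono hxy)
    have h2 : Real.log (h (P y)) ≤ Real.log (h (P x)) :=
      Real.log_le_log (hpos _ (hPmem y)) h1
    simpa only [hgdef, neg_le_neg_iff] using h2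
  set F := hgmono.stieltjesFunction with hFdef
  have hFeq : ∀ x, F x = Function.rightLim g x := fun x => hgmono.stieltjesFunction_eq x
  -- F b = g b since g is constant to the right of b
  have hFb : F b = g b := by
    rw [hFeq]
    apply rightLim_eq_of_tendsto (h := nhdsGT_neBot b)
    apply Filter.Tendsto.congr' _ tendsto_const_nhds
    filter_upwards [self_mem_nhdsWithin] with t (ht : b < t)
    have h1 : P t = b := by
      simp only [hPdef]
      rw [min_eq_right ht.le, max_eq_right hab.le]
    have h2 : P b = b := hPeq b ⟨hab.le, le_rfl⟩
    simp only [hgdef, h1, h2]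
  have hFa : g a ≤ F a := by
    rw [hFeq]; exact hgmono.le_rightLim le_rfl
  -- a.e. lower bound on the rnDeriv
  have key : ∀ᵐ x ∂(volume : Measure ℝ), x ∈ Ioo a b →
      ENNReal.ofReal c ≤ F.measure.rnDeriv volume x := by
    filter_upwards [F.ae_hasDerivAt, hderiv] with x hF hx hmem
    have hxI : x ∈ Icc a b := Ioo_subset_Icc_self hmem
    obtain ⟨hdiff, hle⟩ := hx hxI
    have hxpos : 0 < h x := hpos x hxI
    -- g has derivative g' := -(deriv h x / h x) at x
    have hlog : HasDerivAt (fun t => -Real.log (h t)) (-(deriv h x / h x)) x := by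
      have := (Real.hasDerivAt_log hxpos.ne').comp x hdiff.hasDerivAt
      exact (hdiff.hasDerivAt.log hxpos.ne').neg
    have hgx : HasDerivAt g (-(deriv h x / h x)) x := by
      apply hlog.congr_of_eventuallyEq
      filter_upwards [Ioo_mem_nhds hmem.1 hmem.2] with t ht
      rw [hgdef]; simp only
      rw [hPeq t (Ioo_subset_Icc_self ht)]
    have hc' : c ≤ -(deriv h x / h x) := by
      rw [neg_div' ]
      rw [le_div_iff₀ hxpos]
      nlinarith
    -- F x = g x since g is continuous at x
    have hFx : F x = g x := by
      rw [hFeq]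
      exact (hgmono.continuousWithinAt_Ioi_iff_rightLim_eq.1
        hgx.continuousAt.continuousWithinAt)
    -- compare derivatives via slopes from the right
    have hgle : ∀ t, g t ≤ F t := fun t => (hgmono.le_rightLim le_rfl).trans_eq (hFeq t).symm
    have hslope : -(deriv h x / h x) ≤ (F.measure.rnDeriv volume x).toReal := by
      have tF : Filter.Tendsto (slope F x) (𝓝[>] x) (𝓝 (F.measure.rnDeriv volume x).toReal) :=
        (hasDerivAt_iff_tendsto_slope.1 hF).mono_left
          (nhdsWithin_mono x (fun y hy => ne_of_gt hy))
      have tg : Filter.Tendsto (slope g x) (𝓝[>] x) (𝓝 (-(deriv h x / h x))) :=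
        (hasDerivAt_iff_tendsto_slope.1 hgx).mono_left
          (nhdsWithin_mono x (fun y hy => ne_of_gt hy))
      refine le_of_tendsto_of_tendsto tg tF ?_
      filter_upwards [self_mem_nhdsWithin] with y (hy : x < y)
      rw [slope_def_field, slope_def_field]
      have hnum : g y - g x ≤ F y - F x := by
        have := hgle y
        rw [hFx]; linarith
      exact (div_le_div_iff_of_pos_right (sub_pos.2 hy)).2 hnum
    exact ENNReal.ofReal_le_of_le_toReal (hc'.trans hslope)
  -- integrate the lower bound
  have h1 : ENNReal.ofReal c * volume (Ioo a b) ≤ F.measure (Ioo a b) := by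
    calc ENNReal.ofReal c * volume (Ioo a b)
        = ∫⁻ _ in Ioo a b, ENNReal.ofReal c ∂volume := (setLIntegral_const _ _).symm
      _ ≤ ∫⁻ x in Ioo a b, F.measure.rnDeriv volume x ∂volume :=
          lintegral_mono_ae ((ae_restrict_iff' measurableSet_Ioo).2 key)
      _ ≤ F.measure (Ioo a b) := Measure.setLIntegral_rnDeriv_le _
  have h2 : F.measure (Ioo a b) ≤ ENNReal.ofReal (F b - F a) := by
    rw [← F.measure_Ioc a b]
    exact measure_mono Ioo_subset_Ioc_self
  have h3 : c * (b - a) ≤ F b - F a := by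
    have hv : (volume : Measure ℝ) (Ioo a b) = ENNReal.ofReal (b - a) := Real.volume_Ioo
    have hch := (h1.trans h2)
    rw [hv, ← ENNReal.ofReal_mul hc.le] at hch
    have hFab : (0:ℝ) ≤ F b - F a := sub_nonneg.2 (F.mono hab.le)
    exact (ENNReal.ofReal_le_ofReal_iff hFab).1 hch
  have hga : g a = -Real.log (h a) := by
    simp only [hgdef]; rw [hPeq a ⟨le_rfl, hab.le⟩]
  have hgb : g b = -Real.log (h b) := by
    simp only [hgdef]; rw [hPeq b ⟨hab.le, le_rfl⟩]
  have hlog : Real.log (h b) ≤ Real.log (h a) - c * (b - a) := by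
    have h4 : c * (b - a) ≤ g b - g a := by
      have := hFb; linarith [hFa, h3]
    rw [hga, hgb] at h4; linarith
  calc h b = Real.exp (Real.log (h b)) := (Real.exp_log (hpos b ⟨hab.le, le_rfl⟩)).symm
    _ ≤ Real.exp (Real.log (h a) - c * (b - a)) := Real.exp_le_exp.2 hlog
    _ = h a * Real.exp (-c * (b - a)) := by
        rw [sub_eq_add_neg, Real.exp_add, Real.exp_log (hpos a ⟨le_rfl, hab.le⟩), neg_mul]
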